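/- Let G be a P_6-free finite simple graph, let xy be an edge of G lying in at least three triangles, and suppose that the connected component of G containing x has at least 6 vertices. Then every edge of G with both endpoints in this component is incident to x or to y; equivalently, every vertex of this component other than x and y has all of its neighbours in {x, y}. -/

import Mathlib

/-- A simple graph is `P₆`-free if it contains no six distinct vertices
`v₁, …, v₆` with `vᵢv_{i+1}` an edge for all `i`. -/
def P6Free {V : Type*} (G : SimpleGraph V) : Prop :=
  ¬ ∃ v₁ v₂ v₃ v₄ v₅ v₆ : V, ([v₁, v₂, v₃, v₄, v₅, v₆] : List V).Nodup ∧
    G.Adj v₁ v₂ ∧ G.Adj v₂ v₃ ∧ G.Adj v₃ v₄ ∧ G.Adj v₄ v₅ ∧ G.Adj v₅ v₆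

private lemma nodup6 {V : Type*} {v1 v2 v3 v4 v5 v6 : V}
    (h12 : v1 ≠ v2) (h13 : v1 ≠ v3) (h14 : v1 ≠ v4) (h15 : v1 ≠ v5) (h16 : v1 ≠ v6)
    (h23 : v2 ≠ v3) (h24 : v2 ≠ v4) (h25 : v2 ≠ v5) (h26 : v2 ≠ v6)
    (h34 : v3 ≠ v4) (h35 : v3 ≠ v5) (h36 : v3 ≠ v6)
    (h45 : v4 ≠ v5) (h46 : v4 ≠ v6) (h56 : v5 ≠ v6) :
    ([v1, v2, v3, v4, v5, v6] : List V).Nodup := by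
  simp [h12, h13, h14, h15, h16, h23, h24, h25, h26, h34, h35, h36, h45, h46, h56]

private lemma p6_of_pendant {V : Type*} {G : SimpleGraph V} {x y z1 z2 z3 b c w : V}
    (hxy : G.Adj x y)
    (hxz1 : G.Adj x z1) (hxz2 : G.Adj x z2) (hxz3 : G.Adj x z3)
    (hyz1 : G.Adj y z1) (hyz2 : G.Adj y z2) (hyz3 : G.Adj y z3)
    (h12 : z1 ≠ z2) (h13 : z1 ≠ z3) (_h23 : z2 ≠ z3)
    (hbx : b ≠ x) (hby : b ≠ y) (hb1 : b ≠ z1) (hb2 : b ≠ z2) (hb3 : b ≠ z3)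
    (hcx : c ≠ x) (hcy : c ≠ y) (hc1 : c ≠ z1) (hc2 : c ≠ z2) (hc3 : c ≠ z3)
    (hcb : G.Adj c b)
    (hw : w = x ∨ w = y ∨ w = z1 ∨ w = z2 ∨ w = z3)
    (hbw : G.Adj b w) :
    ∃ v₁ v₂ v₃ v₄ v₅ v₆ : V, ([v₁, v₂, v₃, v₄, v₅, v₆] : List V).Nodup ∧
      G.Adj v₁ v₂ ∧ G.Adj v₂ v₃ ∧ G.Adj v₃ v₄ ∧ G.Adj v₄ v₅ ∧ G.Adj v₅ v₆ := by
  rcases hw with rfl | rfl | rfl | rfl | rfl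
  · exact ⟨c, b, w, z1, y, z2,
      nodup6 hcb.ne hcx hc1 hcy hc2 hbx hb1 hby hb2 hxz1.ne hxy.ne hxz2.ne
        hyz1.ne' h12 hyz2.ne,
      hcb, hbw, hxz1, hyz1.symm, hyz2⟩
  · exact ⟨c, b, w, z1, x, z2,
      nodup6 hcb.ne hcy hc1 hcx hc2 hby hb1 hbx hb2 hyz1.ne hxy.ne' hyz2.ne
        hxz1.ne' h12 hxz2.ne,
      hcb, hbw, hyz1, hxz1.symm, hxz2⟩
  · exact ⟨c, b, w, x, z2, y,
      nodup6 hcb.ne hc1 hcx hc2 hcy hb1 hbx hb2 hby hxz1.ne' h12 hyz1.ne'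
        hxz2.ne hxy.ne hyz2.ne',
      hcb, hbw, hxz1.symm, hxz2, hyz2.symm⟩
  · exact ⟨c, b, w, x, z1, y,
      nodup6 hcb.ne hc2 hcx hc1 hcy hb2 hbx hb1 hby hxz2.ne' h12.symm hyz2.ne'
        hxz1.ne hxy.ne hyz1.ne',
      hcb, hbw, hxz2.symm, hxz1, hyz1.symm⟩
  · exact ⟨c, b, w, x, z1, y,
      nodup6 hcb.ne hc3 hcx hc1 hcy hb3 hbx hb1 hby hxz3.ne' h13.symm hyz3.ne'
        hxz1.ne hxy.ne hyz1.ne',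
      hcb, hbw, hxz3.symm, hxz1, hyz1.symm⟩

private lemma p6_of_adj_z {V : Type*} {G : SimpleGraph V} {x y z1 z2 z3 v : V}
    (hxy : G.Adj x y)
    (hxz1 : G.Adj x z1) (hxz2 : G.Adj x z2) (hxz3 : G.Adj x z3)
    (hyz1 : G.Adj y z1) (hyz2 : G.Adj y z2) (hyz3 : G.Adj y z3)
    (h12 : z1 ≠ z2) (h13 : z1 ≠ z3) (h23 : z2 ≠ z3)
    (hvx : v ≠ x) (hvy : v ≠ y) (hv1 : v ≠ z1) (hv2 : v ≠ z2) (hv3 : v ≠ z3)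
    (hvz1 : G.Adj v z1) :
    ∃ v₁ v₂ v₃ v₄ v₅ v₆ : V, ([v₁, v₂, v₃, v₄, v₅, v₆] : List V).Nodup ∧
      G.Adj v₁ v₂ ∧ G.Adj v₂ v₃ ∧ G.Adj v₃ v₄ ∧ G.Adj v₄ v₅ ∧ G.Adj v₅ v₆ :=
  ⟨v, z1, x, z2, y, z3,
    nodup6 hv1 hvx hv2 hvy hv3 hxz1.ne' h12 hyz1.ne' h13 hxz2.ne hxy.ne hxz3.ne
      hyz2.ne' h23 hyz3.ne,
    hvz1, hxz1.symm, hxz2, hyz2.symm, hyz3⟩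

private lemma p6_of_triangle_edge {V : Type*} {G : SimpleGraph V} {x y z1 z2 z3 b w : V}
    (hxy : G.Adj x y)
    (hxz1 : G.Adj x z1) (hxz2 : G.Adj x z2) (hxz3 : G.Adj x z3)
    (hyz1 : G.Adj y z1) (hyz2 : G.Adj y z2) (hyz3 : G.Adj y z3)
    (h12 : z1 ≠ z2) (h13 : z1 ≠ z3) (h23 : z2 ≠ z3)
    (hz12 : G.Adj z1 z2)
    (hbx : b ≠ x) (hby : b ≠ y) (hb1 : b ≠ z1) (hb2 : b ≠ z2) (hb3 : b ≠ z3)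
    (hw : w = x ∨ w = y ∨ w = z1 ∨ w = z2 ∨ w = z3)
    (hbw : G.Adj b w) :
    ∃ v₁ v₂ v₃ v₄ v₅ v₆ : V, ([v₁, v₂, v₃, v₄, v₅, v₆] : List V).Nodup ∧
      G.Adj v₁ v₂ ∧ G.Adj v₂ v₃ ∧ G.Adj v₃ v₄ ∧ G.Adj v₄ v₅ ∧ G.Adj v₅ v₆ := by
  rcases hw with rfl | rfl | rfl | rfl | rfl
  · exact ⟨b, w, z3, y, z1, z2,
      nodup6 hbx hb3 hby hb1 hb2 hxz3.ne hxy.ne hxz1.ne hxz2.ne hyz3.ne'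
        h13.symm h23.symm hyz1.ne hyz2.ne h12,
      hbw, hxz3, hyz3.symm, hyz1, hz12⟩
  · exact ⟨b, w, z3, x, z1, z2,
      nodup6 hby hb3 hbx hb1 hb2 hyz3.ne hxy.ne' hyz1.ne hyz2.ne hxz3.ne'
        h13.symm h23.symm hxz1.ne hxz2.ne h12,
      hbw, hyz3, hxz3.symm, hxz1, hz12⟩
  · exact ⟨b, w, z2, x, z3, y,
      nodup6 hb1 hb2 hbx hb3 hby h12 hxz1.ne' h13 hyz1.ne' hxz2.ne' h23
        hyz2.ne' hxz3.ne hxy.ne hyz3.ne',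
      hbw, hz12, hxz2.symm, hxz3, hyz3.symm⟩
  · exact ⟨b, w, z1, x, z3, y,
      nodup6 hb2 hb1 hbx hb3 hby h12.symm hxz2.ne' h23 hyz2.ne' hxz1.ne' h13
        hyz1.ne' hxz3.ne hxy.ne hyz3.ne',
      hbw, hz12.symm, hxz1.symm, hxz3, hyz3.symm⟩
  · exact ⟨b, w, x, z1, z2, y,
      nodup6 hb3 hbx hb1 hb2 hby hxz3.ne' h13.symm h23.symm hyz3.ne' hxz1.ne
        hxz2.ne hxy.ne h12 hyz1.ne' hyz2.ne',
      hbw, hxz3.symm, hxz1, hz12, hyz2.symm⟩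

private lemma key2 {V : Type*} {G : SimpleGraph V} {W : Set V} :
    ∀ {a x : V}, G.Walk a x → a ∉ W → x ∈ W →
    (∃ w ∈ W, G.Adj a w) ∨
      ∃ b c w, b ∉ W ∧ c ∉ W ∧ G.Adj c b ∧ w ∈ W ∧ G.Adj b w
  | _, _, SimpleGraph.Walk.nil, ha, hx => absurd hx ha
  | a, x, SimpleGraph.Walk.cons (v := d) h q, ha, hx => by
    by_cases hd : d ∈ W
    · exact Or.inl ⟨d, hd, h⟩
    · rcases key2 q hd hx with ⟨w, hw, hadj⟩ | r
      · exact Or.inr ⟨d, a, w, hd, ha, h, hw, hadj⟩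
      · exact Or.inr r

/-- In a `P₆`-free finite simple graph, if the edge `xy` lies in at least three
triangles and the component of `x` has at least `6` vertices, then every edge of
that component is incident to `x` or `y`. -/
theorem stmt3 {V : Type*} [Fintype V] (G : SimpleGraph V) (hP6 : P6Free G)
    (x y : V) (hxy : G.Adj x y)
    (htri : 3 ≤ {z : V | G.Adj x z ∧ G.Adj y z}.ncard)
    (hcomp : 6 ≤ {z : V | G.Reachable x z}.ncard) :
    ∀ u v : V, G.Adj u v → G.Reachable x u →
      u = x ∨ u = y ∨ v = x ∨ v = y := by
  classical
  intro u v huv hru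
  by_contra hcon
  push_neg at hcon
  obtain ⟨hux, huy, hvx, hvy⟩ := hcon
  -- extract three distinct common neighbours of x and y
  have hTfin : ({z : V | G.Adj x z ∧ G.Adj y z}).Finite := Set.toFinite _
  obtain ⟨z1, hz1⟩ : ({z : V | G.Adj x z ∧ G.Adj y z}).Nonempty := by
    rw [← Set.ncard_pos hTfin]; omega
  obtain ⟨z2, hz2'⟩ : (({z : V | G.Adj x z ∧ G.Adj y z}) \ {z1}).Nonempty := by
    rw [← Set.ncard_pos (Set.toFinite _), Set.ncard_diff_singleton_of_mem hz1]
    omega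
  obtain ⟨z3, hz3'⟩ : ((({z : V | G.Adj x z ∧ G.Adj y z}) \ {z1}) \ {z2}).Nonempty := by
    rw [← Set.ncard_pos (Set.toFinite _),
      Set.ncard_diff_singleton_of_mem hz2',
      Set.ncard_diff_singleton_of_mem hz1]
    omega
  obtain ⟨hxz1, hyz1⟩ := hz1
  have h21 : z2 ≠ z1 := by simpa using hz2'.2
  obtain ⟨hxz2, hyz2⟩ := hz2'.1
  have h31 : z3 ≠ z1 := by simpa using hz3'.1.2
  have h32 : z3 ≠ z2 := by simpa using hz3'.2
  obtain ⟨hxz3, hyz3⟩ := hz3'.1.1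
  have h12 : z1 ≠ z2 := h21.symm
  have h13 : z1 ≠ z3 := h31.symm
  have h23 : z2 ≠ z3 := h32.symm
  -- a boundary edge into W = {x, y, z1, z2, z3}
  have hbd : ∃ b w, b ∉ ({x, y, z1, z2, z3} : Set V) ∧
      w ∈ ({x, y, z1, z2, z3} : Set V) ∧ G.Adj b w := by
    obtain ⟨a, hra, haW⟩ : ∃ a, G.Reachable x a ∧ a ∉ ({x, y, z1, z2, z3} : Set V) := by
      by_contra hno
      push_neg at hno
      have hsub : {z : V | G.Reachable x z} ⊆ ({x, y, z1, z2, z3} : Set V) :=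
        fun a ha => hno a ha
      have hle := Set.ncard_le_ncard hsub (Set.toFinite _)
      have h1 := Set.ncard_insert_le x ({y, z1, z2, z3} : Set V)
      have h2 := Set.ncard_insert_le y ({z1, z2, z3} : Set V)
      have h3 := Set.ncard_insert_le z1 ({z2, z3} : Set V)
      have h4 := Set.ncard_insert_le z2 ({z3} : Set V)
      have h5 : ({z3} : Set V).ncard = 1 := Set.ncard_singleton _
      omega
    obtain ⟨p⟩ := hra.symm
    rcases key2 p haW (by simp) with ⟨w, hw, hadj⟩ | ⟨b, c, w, hbW, _, _, hw, hbw⟩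
    · exact ⟨a, w, haW, hw, hadj⟩
    · exact ⟨b, w, hbW, hw, hbw⟩
  by_cases hu : u ∈ ({x, y, z1, z2, z3} : Set V)
  · by_cases hvW : v ∈ ({x, y, z1, z2, z3} : Set V)
    · -- both endpoints among the z's
      obtain ⟨b, w, hbW, hwW, hbw⟩ := hbd
      simp only [Set.mem_insert_iff, Set.mem_singleton_iff, not_or] at hbW
      obtain ⟨hbx, hby, hb1, hb2, hb3⟩ := hbW
      simp only [Set.mem_insert_iff, Set.mem_singleton_iff] at hu hvW hwW
      rcases hu with rfl | rfl | rfl | rfl | rfl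
      · exact absurd rfl hux
      · exact absurd rfl huy
      · rcases hvW with rfl | rfl | rfl | rfl | rfl
        · exact absurd rfl hvx
        · exact absurd rfl hvy
        · exact absurd rfl huv.ne
        · exact hP6 (p6_of_triangle_edge hxy hxz1 hxz2 hxz3 hyz1 hyz2 hyz3
            h12 h13 h23 huv hbx hby hb1 hb2 hb3 (by tauto) hbw)
        · exact hP6 (p6_of_triangle_edge hxy hxz1 hxz3 hxz2 hyz1 hyz3 hyz2
            h13 h12 h23.symm huv hbx hby hb1 hb3 hb2 (by tauto) hbw)
      · rcases hvW with rfl | rfl | rfl | rfl | rfl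
        · exact absurd rfl hvx
        · exact absurd rfl hvy
        · exact hP6 (p6_of_triangle_edge hxy hxz2 hxz1 hxz3 hyz2 hyz1 hyz3
            h12.symm h23 h13 huv hbx hby hb2 hb1 hb3 (by tauto) hbw)
        · exact absurd rfl huv.ne
        · exact hP6 (p6_of_triangle_edge hxy hxz2 hxz3 hxz1 hyz2 hyz3 hyz1
            h23 h12.symm h13.symm huv hbx hby hb2 hb3 hb1 (by tauto) hbw)
      · rcases hvW with rfl | rfl | rfl | rfl | rfl
        · exact absurd rfl hvx
        · exact absurd rfl hvy
        · exact hP6 (p6_of_triangle_edge hxy hxz3 hxz1 hxz2 hyz3 hyz1 hyz2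
            h13.symm h23.symm h12 huv hbx hby hb3 hb1 hb2 (by tauto) hbw)
        · exact hP6 (p6_of_triangle_edge hxy hxz3 hxz2 hxz1 hyz3 hyz2 hyz1
            h23.symm h13.symm h12.symm huv hbx hby hb3 hb2 hb1 (by tauto) hbw)
        · exact absurd rfl huv.ne
    · -- u is some zi, v outside W
      simp only [Set.mem_insert_iff, Set.mem_singleton_iff, not_or] at hvW
      obtain ⟨nvx, nvy, nv1, nv2, nv3⟩ := hvW
      simp only [Set.mem_insert_iff, Set.mem_singleton_iff] at hu
      rcases hu with rfl | rfl | rfl | rfl | rfl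
      · exact absurd rfl hux
      · exact absurd rfl huy
      · exact hP6 (p6_of_adj_z hxy hxz1 hxz2 hxz3 hyz1 hyz2 hyz3 h12 h13 h23
          nvx nvy nv1 nv2 nv3 huv.symm)
      · exact hP6 (p6_of_adj_z hxy hxz2 hxz1 hxz3 hyz2 hyz1 hyz3 h12.symm h23 h13
          nvx nvy nv2 nv1 nv3 huv.symm)
      · exact hP6 (p6_of_adj_z hxy hxz3 hxz1 hxz2 hyz3 hyz1 hyz2 h13.symm h23.symm h12
          nvx nvy nv3 nv1 nv2 huv.symm)
  · by_cases hvW : v ∈ ({x, y, z1, z2, z3} : Set V)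
    · -- v is some zi, u outside W
      simp only [Set.mem_insert_iff, Set.mem_singleton_iff, not_or] at hu
      obtain ⟨nux, nuy, nu1, nu2, nu3⟩ := hu
      simp only [Set.mem_insert_iff, Set.mem_singleton_iff] at hvW
      rcases hvW with rfl | rfl | rfl | rfl | rfl
      · exact absurd rfl hvx
      · exact absurd rfl hvy
      · exact hP6 (p6_of_adj_z hxy hxz1 hxz2 hxz3 hyz1 hyz2 hyz3 h12 h13 h23
          nux nuy nu1 nu2 nu3 huv)
      · exact hP6 (p6_of_adj_z hxy hxz2 hxz1 hxz3 hyz2 hyz1 hyz3 h12.symm h23 h13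
          nux nuy nu2 nu1 nu3 huv)
      · exact hP6 (p6_of_adj_z hxy hxz3 hxz1 hxz2 hyz3 hyz1 hyz2 h13.symm h23.symm h12
          nux nuy nu3 nu1 nu2 huv)
    · -- both endpoints outside W
      have huW := hu
      simp only [Set.mem_insert_iff, Set.mem_singleton_iff, not_or] at hu hvW
      obtain ⟨nux, nuy, nu1, nu2, nu3⟩ := hu
      obtain ⟨nvx, nvy, nv1, nv2, nv3⟩ := hvW
      obtain ⟨p⟩ := hru.symm
      rcases key2 p huW (show x ∈ ({x, y, z1, z2, z3} : Set V) by simp) with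
        ⟨w, hw, hadj⟩ | ⟨b, c, w, hbW, hcW, hcb, hw, hbw⟩
      · simp only [Set.mem_insert_iff, Set.mem_singleton_iff] at hw
        exact hP6 (p6_of_pendant hxy hxz1 hxz2 hxz3 hyz1 hyz2 hyz3 h12 h13 h23
          nux nuy nu1 nu2 nu3 nvx nvy nv1 nv2 nv3 huv.symm hw hadj)
      · simp only [Set.mem_insert_iff, Set.mem_singleton_iff, not_or] at hbW hcW
        simp only [Set.mem_insert_iff, Set.mem_singleton_iff] at hw
        exact hP6 (p6_of_pendant hxy hxz1 hxz2 hxz3 hyz1 hyz2 hyz3 h12 h13 h23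
          hbW.1 hbW.2.1 hbW.2.2.1 hbW.2.2.2.1 hbW.2.2.2.2
          hcW.1 hcW.2.1 hcW.2.2.1 hcW.2.2.2.1 hcW.2.2.2.2 hcb hw hbw)
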